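/- Let c>0. For d∈(0,c) set I₀(d)=∫_d^c dy/√((c²−y²)(y²−d²)), I₁(d)=∫₀^d dy/√((c²−y²)(d²−y²)), and τ*(d)=−4π·I₁(d)/I₀(d). Then: (1) τ*(d)<0 for all d∈(0,c); (2) τ* is strictly decreasing on (0,c); (3) τ*(d)→0 as d→0⁺ and τ*(d)→−∞ as d→c⁻. Hence τ* has an inverse function h:(−∞,0)→(0,c). -/

import Mathlib

/-- `I₀(d) = ∫_d^c dy/√((c²−y²)(y²−d²))`. -/
noncomputable def I0 (c d : ℝ) : ℝ :=
  ∫ y in d..c, 1 / Real.sqrt ((c^2 - y^2) * (y^2 - d^2))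

/-- `I₁(d) = ∫₀^d dy/√((c²−y²)(d²−y²))`. -/
noncomputable def I1 (c d : ℝ) : ℝ :=
  ∫ y in (0:ℝ)..d, 1 / Real.sqrt ((c^2 - y^2) * (d^2 - y^2))

/-- `τ*(d) = −4π·I₁(d)/I₀(d)`. -/
noncomputable def tauStar (c d : ℝ) : ℝ := -4 * Real.pi * I1 c d / I0 c d

open Real MeasureTheory Set Filter intervalIntegral Topology

noncomputable def J1 (c d : ℝ) : ℝ :=
  ∫ θ in (0:ℝ)..(π/2), 1 / Real.sqrt (c^2 - d^2 * Real.sin θ ^ 2)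

noncomputable def J0 (c d : ℝ) : ℝ :=
  ∫ θ in (0:ℝ)..(π/2), 1 / Real.sqrt (d^2 + (c^2 - d^2) * Real.sin θ ^ 2)

lemma I1_eq {c d : ℝ} (hd : 0 < d) (hdc : d < c) : I1 c d = J1 c d := by
  have hc : 0 < c := hd.trans hdc
  have hpi2 : (0:ℝ) < π/2 := by positivity
  set g : ℝ → ℝ := fun y => 1 / Real.sqrt ((c^2 - y^2) * (d^2 - y^2)) with hg
  have hsub : Set.Ioo (0:ℝ) (π/2) ⊆ Set.Icc (-(π/2)) (π/2) := fun x hx =>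
    ⟨by linarith [hx.1], hx.2.le⟩
  have hderiv : ∀ θ ∈ Set.Ioo (0:ℝ) (π/2),
      HasDerivWithinAt (fun θ => d * Real.sin θ) (d * Real.cos θ) (Set.Ioo (0:ℝ) (π/2)) θ :=
    fun θ _ => ((Real.hasDerivAt_sin θ).const_mul d).hasDerivWithinAt
  have hinj : Set.InjOn (fun θ => d * Real.sin θ) (Set.Ioo (0:ℝ) (π/2)) := by
    intro x hx y hy hxy
    have := mul_left_cancel₀ (ne_of_gt hd) hxy
    exact Real.strictMonoOn_sin.injOn (hsub hx) (hsub hy) this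
  have himg : (fun θ => d * Real.sin θ) '' Set.Ioo (0:ℝ) (π/2) = Set.Ioo 0 d := by
    ext y
    constructor
    · rintro ⟨θ, hθ, rfl⟩
      have h1 : 0 < Real.sin θ := Real.sin_pos_of_pos_of_lt_pi hθ.1 (by linarith [Real.pi_pos, hθ.2])
      have h2 : Real.sin θ < 1 := by
        have := Real.strictMonoOn_sin (hsub hθ) ⟨by linarith [Real.pi_pos], le_refl _⟩ hθ.2
        rwa [Real.sin_pi_div_two] at this
      simp only []
      exact ⟨by positivity, mul_lt_of_lt_one_right hd h2⟩
    · rintro hy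
      have h0 : 0 < y/d := div_pos hy.1 hd
      refine ⟨Real.arcsin (y/d), ⟨Real.arcsin_pos.mpr h0,
        Real.arcsin_lt_pi_div_two.mpr (by rw [div_lt_one hd]; exact hy.2)⟩, ?_⟩
      show d * Real.sin (Real.arcsin (y/d)) = y
      rw [Real.sin_arcsin (by linarith) ((div_le_one hd).mpr hy.2.le)]
      field_simp
  have key := MeasureTheory.integral_image_eq_integral_abs_deriv_smul measurableSet_Ioo hderiv hinj g
  rw [himg] at key
  have : I1 c d = ∫ y in Set.Ioo (0:ℝ) d, g y := by
    rw [I1, intervalIntegral.integral_of_le hd.le, MeasureTheory.integral_Ioc_eq_integral_Ioo]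
  rw [this, key, J1, intervalIntegral.integral_of_le hpi2.le,
    MeasureTheory.integral_Ioc_eq_integral_Ioo]
  apply MeasureTheory.setIntegral_congr_fun measurableSet_Ioo
  intro θ hθ
  have hcos : 0 < Real.cos θ := Real.cos_pos_of_mem_Ioo ⟨by linarith [hθ.1], hθ.2⟩
  have hsin : 0 < Real.sin θ := Real.sin_pos_of_pos_of_lt_pi hθ.1 (by linarith [Real.pi_pos, hθ.2])
  have hA : (0:ℝ) < c^2 - d^2 * Real.sin θ ^ 2 := by
    nlinarith [Real.sin_sq_le_one θ, hd, hdc]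
  have hsc : Real.sin θ ^ 2 + Real.cos θ ^ 2 = 1 := Real.sin_sq_add_cos_sq θ
  have e1 : d^2 - (d * Real.sin θ)^2 = (d * Real.cos θ)^2 := by nlinarith
  have e2 : c^2 - (d * Real.sin θ)^2 = c^2 - d^2 * Real.sin θ ^ 2 := by ring
  simp only [g, smul_eq_mul]
  rw [e1, e2, Real.sqrt_mul hA.le, Real.sqrt_sq (by positivity : (0:ℝ) ≤ d * Real.cos θ),
    abs_of_pos (by positivity : (0:ℝ) < d * Real.cos θ)]
  have hsA : 0 < Real.sqrt (c^2 - d^2 * Real.sin θ ^ 2) := Real.sqrt_pos.mpr hA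
  field_simp

lemma I0_eq {c d : ℝ} (hd : 0 < d) (hdc : d < c) : I0 c d = J0 c d := by
  have hc : 0 < c := hd.trans hdc
  have hpi2 : (0:ℝ) < π/2 := by positivity
  have hc2d2 : (0:ℝ) < c^2 - d^2 := by nlinarith
  set g : ℝ → ℝ := fun y => 1 / Real.sqrt ((c^2 - y^2) * (y^2 - d^2)) with hg
  set u : ℝ → ℝ := fun θ => d^2 + (c^2 - d^2) * Real.sin θ ^ 2 with hu
  have hupos : ∀ θ, 0 < u θ := by
    intro θ; simp only [u]; nlinarith [sq_nonneg (Real.sin θ)]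
  set φ : ℝ → ℝ := fun θ => Real.sqrt (u θ) with hφ
  set φ' : ℝ → ℝ := fun θ =>
    (c^2 - d^2) * Real.sin θ * Real.cos θ / Real.sqrt (u θ) with hφ'
  have hsub : Set.Ioo (0:ℝ) (π/2) ⊆ Set.Icc (-(π/2)) (π/2) := fun x hx =>
    ⟨by linarith [hx.1], hx.2.le⟩
  have hderiv : ∀ θ ∈ Set.Ioo (0:ℝ) (π/2),
      HasDerivWithinAt φ (φ' θ) (Set.Ioo (0:ℝ) (π/2)) θ := by
    intro θ _
    have hu' : HasDerivAt u ((c^2 - d^2) * (2 * Real.sin θ ^ 1 * Real.cos θ)) θ := by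
      simpa [u] using (((Real.hasDerivAt_sin θ).pow 2).const_mul (c^2 - d^2)).const_add (d^2)
    have := (Real.hasDerivAt_sqrt (ne_of_gt (hupos θ))).comp θ hu'
    have heq : (1 / (2 * Real.sqrt (u θ))) * ((c^2 - d^2) * (2 * Real.sin θ ^ 1 * Real.cos θ))
        = φ' θ := by
      simp only [φ', pow_one]
      field_simp
    rw [heq] at this
    exact this.hasDerivWithinAt
  have hinj : Set.InjOn φ (Set.Ioo (0:ℝ) (π/2)) := by
    intro x hx y hy hxy
    have hux : u x = u y := by
      have := congrArg (fun t => t^2) hxy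
      simpa [φ, Real.sq_sqrt (hupos x).le, Real.sq_sqrt (hupos y).le] using this
    have hsx : Real.sin x = Real.sin y := by
      have h2 : Real.sin x ^ 2 = Real.sin y ^ 2 := by
        have : (c^2 - d^2) * Real.sin x ^ 2 = (c^2 - d^2) * Real.sin y ^ 2 := by
          simp only [u] at hux; linarith
        exact mul_left_cancel₀ (ne_of_gt hc2d2) this
      have hx0 : 0 < Real.sin x := Real.sin_pos_of_pos_of_lt_pi hx.1 (by linarith [Real.pi_pos, hx.2])
      have hy0 : 0 < Real.sin y := Real.sin_pos_of_pos_of_lt_pi hy.1 (by linarith [Real.pi_pos, hy.2])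
      nlinarith
    exact Real.strictMonoOn_sin.injOn (hsub hx) (hsub hy) hsx
  have himg : φ '' Set.Ioo (0:ℝ) (π/2) = Set.Ioo d c := by
    ext y
    constructor
    · rintro ⟨θ, hθ, rfl⟩
      have h1 : 0 < Real.sin θ := Real.sin_pos_of_pos_of_lt_pi hθ.1 (by linarith [Real.pi_pos, hθ.2])
      have h2 : Real.sin θ < 1 := by
        have := Real.strictMonoOn_sin (hsub hθ) ⟨by linarith [Real.pi_pos], le_refl _⟩ hθ.2
        rwa [Real.sin_pi_div_two] at this
      have hs2 : Real.sin θ ^ 2 < 1 := by nlinarith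
      have hul : d^2 < u θ := by
        simp only [u]; nlinarith [mul_pos hc2d2 (pow_pos h1 2)]
      have hur : u θ < c^2 := by
        simp only [u]; nlinarith [mul_lt_mul_of_pos_left hs2 hc2d2]
      constructor
      · have := Real.sqrt_lt_sqrt (by positivity) hul
        rwa [Real.sqrt_sq hd.le] at this
      · have := Real.sqrt_lt_sqrt (hupos θ).le hur
        rwa [Real.sqrt_sq hc.le] at this
    · rintro hy
      have hy0 : 0 < y := hd.trans hy.1
      have ht0 : 0 < (y^2 - d^2) / (c^2 - d^2) := by
        apply div_pos (by nlinarith [hy.1]) hc2d2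
      have ht1 : (y^2 - d^2) / (c^2 - d^2) < 1 := by
        rw [div_lt_one hc2d2]; nlinarith [hy.2]
      set t := (y^2 - d^2) / (c^2 - d^2) with htdef
      have hst0 : 0 < Real.sqrt t := Real.sqrt_pos.mpr ht0
      have hst1 : Real.sqrt t < 1 := by
        rw [show (1:ℝ) = Real.sqrt 1 by simp]
        exact Real.sqrt_lt_sqrt ht0.le ht1
      refine ⟨Real.arcsin (Real.sqrt t), ⟨Real.arcsin_pos.mpr hst0,
        Real.arcsin_lt_pi_div_two.mpr hst1⟩, ?_⟩
      show Real.sqrt (u (Real.arcsin (Real.sqrt t))) = y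
      have hsin : Real.sin (Real.arcsin (Real.sqrt t)) = Real.sqrt t :=
        Real.sin_arcsin (by linarith) hst1.le
      have : u (Real.arcsin (Real.sqrt t)) = y^2 := by
        simp only [u, hsin, Real.sq_sqrt ht0.le]
        rw [htdef, mul_div_assoc', mul_div_cancel_left₀ _ hc2d2.ne']
        ring
      rw [this, Real.sqrt_sq hy0.le]
  have key := MeasureTheory.integral_image_eq_integral_abs_deriv_smul measurableSet_Ioo hderiv hinj g
  rw [himg] at key
  have : I0 c d = ∫ y in Set.Ioo d c, g y := by
    rw [I0, intervalIntegral.integral_of_le hdc.le, MeasureTheory.integral_Ioc_eq_integral_Ioo]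
  rw [this, key, J0, intervalIntegral.integral_of_le hpi2.le,
    MeasureTheory.integral_Ioc_eq_integral_Ioo]
  apply MeasureTheory.setIntegral_congr_fun measurableSet_Ioo
  intro θ hθ
  have hcos : 0 < Real.cos θ := Real.cos_pos_of_mem_Ioo ⟨by linarith [hθ.1], hθ.2⟩
  have hsin : 0 < Real.sin θ := Real.sin_pos_of_pos_of_lt_pi hθ.1 (by linarith [Real.pi_pos, hθ.2])
  have hsc : Real.sin θ ^ 2 + Real.cos θ ^ 2 = 1 := Real.sin_sq_add_cos_sq θ
  have hsqu : Real.sqrt (u θ) ^ 2 = u θ := Real.sq_sqrt (hupos θ).le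
  have e1 : c^2 - (φ θ)^2 = (c^2 - d^2) * Real.cos θ ^ 2 := by
    simp only [φ]; rw [hsqu]; simp only [u]; nlinarith
  have e2 : (φ θ)^2 - d^2 = (c^2 - d^2) * Real.sin θ ^ 2 := by
    simp only [φ]; rw [hsqu]; simp only [u]; ring
  simp only [g, smul_eq_mul]
  rw [e1, e2]
  have e3 : (c^2 - d^2) * Real.cos θ ^ 2 * ((c^2 - d^2) * Real.sin θ ^ 2)
      = ((c^2 - d^2) * Real.sin θ * Real.cos θ)^2 := by ring
  rw [e3, Real.sqrt_sq (by positivity)]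
  have hsu : 0 < Real.sqrt (u θ) := Real.sqrt_pos.mpr (hupos θ)
  have habs : |φ' θ| = φ' θ := abs_of_pos (by simp only [φ']; positivity)
  rw [habs]
  simp only [φ', u]
  have hsu' : (0:ℝ) < Real.sqrt (d^2 + (c^2-d^2)*Real.sin θ^2) := by
    apply Real.sqrt_pos.mpr; nlinarith [sq_nonneg (Real.sin θ)]
  have hx : (c^2-d^2)*Real.sin θ*Real.cos θ ≠ 0 := by positivity
  field_simp

lemma denom1_pos {c d : ℝ} (hd : 0 ≤ d) (hdc : d < c) (θ : ℝ) :
    0 < c^2 - d^2 * Real.sin θ ^ 2 := by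
  nlinarith [Real.sin_sq_le_one θ, sq_nonneg (Real.sin θ)]

lemma denom0_pos {c d : ℝ} (hd : 0 < d) (θ : ℝ) (hdc : d < c) :
    0 < d^2 + (c^2 - d^2) * Real.sin θ ^ 2 := by
  have h1 : 0 ≤ (c^2 - d^2) * Real.sin θ ^ 2 :=
    mul_nonneg (by nlinarith) (sq_nonneg _)
  nlinarith

lemma cont1 {c d : ℝ} (hd : 0 ≤ d) (hdc : d < c) :
    Continuous fun θ => 1 / Real.sqrt (c^2 - d^2 * Real.sin θ ^ 2) := by
  apply continuous_const.div
  · exact (continuous_const.sub (continuous_const.mul (Real.continuous_sin.pow 2))).sqrt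
  · intro θ
    exact ne_of_gt (Real.sqrt_pos.mpr (denom1_pos hd hdc θ))

lemma cont0 {c d : ℝ} (hd : 0 < d) (hdc : d < c) :
    Continuous fun θ => 1 / Real.sqrt (d^2 + (c^2 - d^2) * Real.sin θ ^ 2) := by
  apply continuous_const.div
  · exact (continuous_const.add (continuous_const.mul (Real.continuous_sin.pow 2))).sqrt
  · intro θ
    exact ne_of_gt (Real.sqrt_pos.mpr (denom0_pos hd θ hdc))

lemma J1_lb {c d : ℝ} (hd : 0 ≤ d) (hdc : d < c) : π/(2*c) ≤ J1 c d := by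
  have hc : 0 < c := lt_of_le_of_lt hd hdc
  have hpi2 : (0:ℝ) ≤ π/2 := by positivity
  have h : π/(2*c) = ((π/2 : ℝ) - 0) • (1/c) := by
    rw [smul_eq_mul]; field_simp; ring
  rw [h, ← intervalIntegral.integral_const, J1]
  apply intervalIntegral.integral_mono_on hpi2 (intervalIntegrable_const)
    ((cont1 hd hdc).intervalIntegrable _ _)
  intro θ _
  rw [div_le_div_iff₀ hc (Real.sqrt_pos.mpr (denom1_pos hd hdc θ)), one_mul, one_mul]
  calc Real.sqrt (c^2 - d^2 * Real.sin θ ^ 2) ≤ Real.sqrt (c^2) :=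
        Real.sqrt_le_sqrt (by nlinarith [sq_nonneg (d * Real.sin θ)])
    _ = c := Real.sqrt_sq hc.le

lemma J1_ub {c d : ℝ} (hd : 0 ≤ d) (hdc : d < c) :
    J1 c d ≤ (π/2) * (1 / Real.sqrt (c^2 - d^2)) := by
  have hc : 0 < c := lt_of_le_of_lt hd hdc
  have hpi2 : (0:ℝ) ≤ π/2 := by positivity
  have hcd : (0:ℝ) < c^2 - d^2 := by nlinarith
  have h : (π/2) * (1 / Real.sqrt (c^2 - d^2)) = ((π/2 : ℝ) - 0) • (1/Real.sqrt (c^2-d^2)) := by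
    rw [smul_eq_mul]; ring
  rw [h, ← intervalIntegral.integral_const, J1]
  apply intervalIntegral.integral_mono_on hpi2 ((cont1 hd hdc).intervalIntegrable _ _)
    intervalIntegrable_const
  intro θ _
  apply one_div_le_one_div_of_le (Real.sqrt_pos.mpr hcd)
  apply Real.sqrt_le_sqrt
  nlinarith [sq_nonneg (Real.sin θ), sq_nonneg d, Real.sin_sq_le_one θ, sq_nonneg (d * Real.sin θ)]

lemma J0_lb {c d : ℝ} (hd : 0 < d) (hdc : d < c) : π/(2*c) ≤ J0 c d := by
  have hc : 0 < c := hd.trans hdc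
  have hpi2 : (0:ℝ) ≤ π/2 := by positivity
  have h : π/(2*c) = ((π/2 : ℝ) - 0) • (1/c) := by
    rw [smul_eq_mul]; field_simp; ring
  rw [h, ← intervalIntegral.integral_const, J0]
  apply intervalIntegral.integral_mono_on hpi2 (intervalIntegrable_const)
    ((cont0 hd hdc).intervalIntegrable _ _)
  intro θ _
  rw [div_le_div_iff₀ hc (Real.sqrt_pos.mpr (denom0_pos hd θ hdc)), one_mul, one_mul]
  calc Real.sqrt (d^2 + (c^2 - d^2) * Real.sin θ ^ 2) ≤ Real.sqrt (c^2) :=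
        Real.sqrt_le_sqrt (by
          have := mul_le_mul_of_nonneg_left (Real.sin_sq_le_one θ)
            (show (0:ℝ) ≤ c^2 - d^2 by nlinarith)
          linarith)
    _ = c := Real.sqrt_sq hc.le

lemma J0_ub {c d : ℝ} (hd : 0 < d) (hdc : d < c) : J0 c d ≤ (π/2) * (1/d) := by
  have hpi2 : (0:ℝ) ≤ π/2 := by positivity
  have h : (π/2) * (1/d) = ((π/2 : ℝ) - 0) • (1/d) := by rw [smul_eq_mul]; ring
  rw [h, ← intervalIntegral.integral_const, J0]
  apply intervalIntegral.integral_mono_on hpi2 ((cont0 hd hdc).intervalIntegrable _ _)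
    intervalIntegrable_const
  intro θ _
  apply one_div_le_one_div_of_le hd
  calc d = Real.sqrt (d^2) := (Real.sqrt_sq hd.le).symm
    _ ≤ _ := Real.sqrt_le_sqrt (by
          have : 0 ≤ (c^2 - d^2) * Real.sin θ ^ 2 := mul_nonneg (by nlinarith) (sq_nonneg _)
          linarith)

lemma J1_pos {c d : ℝ} (hd : 0 ≤ d) (hdc : d < c) : 0 < J1 c d :=
  lt_of_lt_of_le (div_pos Real.pi_pos (by linarith) : (0:ℝ) < π/(2*c)) (J1_lb hd hdc)

lemma J0_pos {c d : ℝ} (hd : 0 < d) (hdc : d < c) : 0 < J0 c d :=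
  lt_of_lt_of_le (div_pos Real.pi_pos (by linarith) : (0:ℝ) < π/(2*c)) (J0_lb hd hdc)

lemma J1_mono {c d₁ d₂ : ℝ} (h1 : 0 < d₁) (h12 : d₁ < d₂) (h2c : d₂ < c) :
    J1 c d₁ < J1 c d₂ := by
  have hpi2 : (0:ℝ) < π/2 := by positivity
  have hi1 : IntervalIntegrable (fun θ => 1 / Real.sqrt (c^2 - d₁^2 * Real.sin θ ^ 2))
      MeasureTheory.volume 0 (π/2) :=
    (cont1 (le_of_lt h1) (h12.trans h2c)).intervalIntegrable _ _
  have hi2 : IntervalIntegrable (fun θ => 1 / Real.sqrt (c^2 - d₂^2 * Real.sin θ ^ 2))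
      MeasureTheory.volume 0 (π/2) :=
    (cont1 (le_of_lt (h1.trans h12)) h2c).intervalIntegrable _ _
  have key : 0 < J1 c d₂ - J1 c d₁ := by
    rw [J1, J1, ← intervalIntegral.integral_sub hi2 hi1]
    apply intervalIntegral.intervalIntegral_pos_of_pos_on (hi2.sub hi1) _ hpi2
    intro θ hθ
    have hsin : 0 < Real.sin θ := Real.sin_pos_of_pos_of_lt_pi hθ.1 (by linarith [Real.pi_pos, hθ.2])
    have hA2 := denom1_pos (le_of_lt (h1.trans h12)) h2c θ
    have hlt : c^2 - d₂^2 * Real.sin θ ^ 2 < c^2 - d₁^2 * Real.sin θ ^ 2 := by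
      have key2 := mul_pos (show (0:ℝ) < d₂^2 - d₁^2 by nlinarith) (pow_pos hsin 2)
      nlinarith [key2]
    have := Real.sqrt_lt_sqrt hA2.le hlt
    have h0 : 0 < Real.sqrt (c^2 - d₂^2 * Real.sin θ ^ 2) := Real.sqrt_pos.mpr hA2
    have := one_div_lt_one_div_of_lt h0 this
    linarith
  linarith

lemma J0_anti {c d₁ d₂ : ℝ} (h1 : 0 < d₁) (h12 : d₁ < d₂) (h2c : d₂ < c) :
    J0 c d₂ < J0 c d₁ := by
  have hpi2 : (0:ℝ) < π/2 := by positivity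
  have hc1 : d₁ < c := h12.trans h2c
  have hi1 : IntervalIntegrable (fun θ => 1 / Real.sqrt (d₁^2 + (c^2 - d₁^2) * Real.sin θ ^ 2))
      MeasureTheory.volume 0 (π/2) := (cont0 h1 hc1).intervalIntegrable _ _
  have hi2 : IntervalIntegrable (fun θ => 1 / Real.sqrt (d₂^2 + (c^2 - d₂^2) * Real.sin θ ^ 2))
      MeasureTheory.volume 0 (π/2) := (cont0 (h1.trans h12) h2c).intervalIntegrable _ _
  have key : 0 < J0 c d₁ - J0 c d₂ := by
    rw [J0, J0, ← intervalIntegral.integral_sub hi1 hi2]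
    apply intervalIntegral.intervalIntegral_pos_of_pos_on (hi1.sub hi2) _ hpi2
    intro θ hθ
    have hsin : 0 < Real.sin θ := Real.sin_pos_of_pos_of_lt_pi hθ.1 (by linarith [Real.pi_pos, hθ.2])
    have hs1 : Real.sin θ ^ 2 < 1 := by
      have h2 : Real.sin θ < 1 := by
        have := Real.strictMonoOn_sin ⟨by linarith [hθ.1], hθ.2.le⟩
          ⟨by linarith [Real.pi_pos], le_refl _⟩ hθ.2
        rwa [Real.sin_pi_div_two] at this
      nlinarith
    have hA1 := denom0_pos h1 θ hc1
    have hlt : d₁^2 + (c^2 - d₁^2) * Real.sin θ ^ 2 < d₂^2 + (c^2 - d₂^2) * Real.sin θ ^ 2 := by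
      have key2 := mul_pos (show (0:ℝ) < d₂^2 - d₁^2 by nlinarith)
        (show (0:ℝ) < 1 - Real.sin θ^2 by linarith)
      nlinarith [key2]
    have := Real.sqrt_lt_sqrt hA1.le hlt
    have h0 : 0 < Real.sqrt (d₁^2 + (c^2 - d₁^2) * Real.sin θ ^ 2) := Real.sqrt_pos.mpr hA1
    have := one_div_lt_one_div_of_lt h0 this
    linarith
  linarith

lemma denom1_pos' {c d : ℝ} (hd2 : d^2 < c^2) (θ : ℝ) :
    0 < c^2 - d^2 * Real.sin θ ^ 2 := by
  nlinarith [mul_le_of_le_one_right (sq_nonneg d) (Real.sin_sq_le_one θ)]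

lemma cont1' {c d : ℝ} (hd2 : d^2 < c^2) :
    Continuous fun θ => 1 / Real.sqrt (c^2 - d^2 * Real.sin θ ^ 2) := by
  apply continuous_const.div
  · exact (continuous_const.sub (continuous_const.mul (Real.continuous_sin.pow 2))).sqrt
  · exact fun θ => ne_of_gt (Real.sqrt_pos.mpr (denom1_pos' hd2 θ))

lemma J1_contAt {c d₀ : ℝ} (h0 : 0 < d₀) (h0c : d₀ < c) :
    ContinuousAt (fun d => J1 c d) d₀ := by
  have hc : 0 < c := h0.trans h0c
  set r := (d₀ + c)/2 with hr
  have hr1 : d₀ < r := by simp only [hr]; linarith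
  have hr2 : r < c := by simp only [hr]; linarith
  have hr0 : 0 < r := by linarith
  have hmem : Set.Ioo (-r) r ∈ 𝓝 d₀ := Ioo_mem_nhds (by linarith) hr1
  have hrc2 : (0:ℝ) < c^2 - r^2 := by nlinarith
  simp only [J1]
  apply intervalIntegral.continuousAt_of_dominated_interval
    (bound := fun _ => 1 / Real.sqrt (c^2 - r^2))
  · filter_upwards [hmem] with d hd
    have hd2 : d^2 < c^2 := by rcases hd with ⟨hd1, hd2⟩; nlinarith
    exact (cont1' hd2).aestronglyMeasurable
  · filter_upwards [hmem] with d hd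
    apply Filter.Eventually.of_forall
    intro θ _
    have hd2 : d^2 < c^2 := by rcases hd with ⟨hd1, hd2⟩; nlinarith
    have hpos := denom1_pos' hd2 θ
    rw [Real.norm_eq_abs, abs_of_nonneg (by positivity)]
    apply one_div_le_one_div_of_le (Real.sqrt_pos.mpr hrc2)
    apply Real.sqrt_le_sqrt
    have hdr : d^2 ≤ r^2 := by rcases hd with ⟨hd1, hd2⟩; nlinarith
    nlinarith [mul_le_mul_of_nonneg_right hdr (sq_nonneg (Real.sin θ)),
      mul_le_of_le_one_right (sq_nonneg r) (Real.sin_sq_le_one θ)]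
  · exact intervalIntegrable_const
  · apply Filter.Eventually.of_forall
    intro θ _
    have hd02 : d₀^2 < c^2 := by nlinarith
    apply ContinuousAt.div continuousAt_const
    · exact (Real.continuous_sqrt.comp
        (continuous_const.sub ((continuous_pow 2).mul continuous_const))).continuousAt
    · exact ne_of_gt (Real.sqrt_pos.mpr (denom1_pos' hd02 θ))

lemma J0_contAt {c d₀ : ℝ} (h0 : 0 < d₀) (h0c : d₀ < c) :
    ContinuousAt (fun d => J0 c d) d₀ := by
  have hc : 0 < c := h0.trans h0c
  have hmem : Set.Ioo (d₀/2) c ∈ 𝓝 d₀ := Ioo_mem_nhds (by linarith) h0c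
  simp only [J0]
  apply intervalIntegral.continuousAt_of_dominated_interval
    (bound := fun _ => 1 / (d₀/2))
  · filter_upwards [hmem] with d hd
    exact (cont0 (lt_trans (by linarith) hd.1) hd.2).aestronglyMeasurable
  · filter_upwards [hmem] with d hd
    apply Filter.Eventually.of_forall
    intro θ _
    have hdpos : 0 < d := lt_trans (by linarith) hd.1
    have hpos := denom0_pos hdpos θ hd.2
    rw [Real.norm_eq_abs, abs_of_nonneg (by positivity)]
    apply one_div_le_one_div_of_le (by linarith)
    calc d₀/2 ≤ d := hd.1.le
      _ = Real.sqrt (d^2) := (Real.sqrt_sq hdpos.le).symm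
      _ ≤ _ := Real.sqrt_le_sqrt (by
          have : 0 ≤ (c^2 - d^2) * Real.sin θ ^ 2 :=
            mul_nonneg (by nlinarith [hd.2, hdpos]) (sq_nonneg _)
          linarith)
  · exact intervalIntegrable_const
  · apply Filter.Eventually.of_forall
    intro θ _
    apply ContinuousAt.div continuousAt_const
    · apply Continuous.continuousAt
      apply Real.continuous_sqrt.comp
      exact ((continuous_pow 2).add (((continuous_const.sub (continuous_pow 2)).mul
        continuous_const)))
    · exact ne_of_gt (Real.sqrt_pos.mpr (denom0_pos h0 θ h0c))

lemma log_aux {K a b : ℝ} (hK : 0 < K) (ha : 0 < a) (hab : a ≤ b) :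
    ∫ θ in a..b, 1/(K*θ) = (1/K) * Real.log (b/a) := by
  have h0 : (0:ℝ) ∉ Set.uIcc a b := by
    rw [Set.uIcc_of_le hab]
    intro h
    exact absurd h.1 (not_le.mpr ha)
  rw [← integral_one_div h0]
  rw [← intervalIntegral.integral_const_mul]
  apply intervalIntegral.integral_congr
  intro x _
  show 1/(K*x) = 1/K * (1/x)
  rw [div_mul_div_comm, one_mul]

lemma J0_ge_log {c d : ℝ} (hd : 0 < d) (hdc : d < c) (hsm : d/c < π/2) :
    (1/(Real.sqrt 2 * c)) * Real.log ((π/2)/(d/c)) ≤ J0 c d := by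
  have hc : 0 < c := hd.trans hdc
  have ha : 0 < d/c := by positivity
  have hK : 0 < Real.sqrt 2 * c := by positivity
  rw [← log_aux hK ha hsm.le]
  have hintK : IntervalIntegrable (fun θ : ℝ => 1/(Real.sqrt 2 * c * θ))
      MeasureTheory.volume (d/c) (π/2) := by
    apply ContinuousOn.intervalIntegrable
    apply ContinuousOn.div continuousOn_const (by fun_prop)
    intro x hx
    rw [Set.uIcc_of_le hsm.le] at hx
    have : 0 < x := lt_of_lt_of_le ha hx.1
    positivity
  have step1 : ∫ θ in (d/c)..(π/2), 1/(Real.sqrt 2 * c * θ)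
      ≤ ∫ θ in (d/c)..(π/2), 1 / Real.sqrt (d^2 + (c^2 - d^2) * Real.sin θ ^ 2) := by
    apply intervalIntegral.integral_mono_on hsm.le hintK
      ((cont0 hd hdc).intervalIntegrable _ _)
    intro θ hθ
    have hθ0 : 0 < θ := lt_of_lt_of_le ha hθ.1
    have hθpi : θ ≤ π/2 := hθ.2
    have hsin0 : 0 ≤ Real.sin θ :=
      Real.sin_nonneg_of_nonneg_of_le_pi hθ0.le (by linarith [Real.pi_pos])
    have hsinle : Real.sin θ ≤ θ := Real.sin_le hθ0.le
    have h1 : Real.sin θ ^ 2 ≤ θ^2 := pow_le_pow_left₀ hsin0 hsinle 2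
    have h2 : d ≤ c*θ := by
      have := hθ.1
      rw [div_le_iff₀ hc] at this
      linarith
    have hden : d^2 + (c^2 - d^2) * Real.sin θ ^ 2 ≤ (Real.sqrt 2 * c * θ)^2 := by
      have e : (Real.sqrt 2 * c * θ)^2 = 2*(c*θ)^2 := by
        rw [mul_pow, mul_pow, Real.sq_sqrt (by norm_num : (0:ℝ) ≤ 2)]; ring
      rw [e]
      have h3 : (c^2 - d^2) * Real.sin θ ^ 2 ≤ c^2 * θ^2 := by
        nlinarith [sq_nonneg (Real.sin θ), sq_nonneg d, sq_nonneg (d * Real.sin θ)]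
      have h4 : d^2 ≤ (c*θ)^2 := pow_le_pow_left₀ hd.le h2 2
      nlinarith
    calc 1/(Real.sqrt 2 * c * θ) = 1/Real.sqrt ((Real.sqrt 2 * c * θ)^2) := by
          rw [Real.sqrt_sq (by positivity)]
      _ ≤ _ := one_div_le_one_div_of_le (Real.sqrt_pos.mpr (denom0_pos hd θ hdc))
          (Real.sqrt_le_sqrt hden)
  have step2 : ∫ θ in (d/c)..(π/2), 1 / Real.sqrt (d^2 + (c^2 - d^2) * Real.sin θ ^ 2)
      ≤ J0 c d := by
    apply intervalIntegral.integral_mono_interval ha.le hsm.le (le_refl _)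
      (Filter.Eventually.of_forall (fun θ => by positivity))
      ((cont0 hd hdc).intervalIntegrable _ _)
  linarith

lemma J1_ge_log {c d : ℝ} (hd : 0 < d) (hdc : d < c)
    (hε : Real.sqrt (c^2 - d^2)/c < π/2) :
    (1/(Real.sqrt 2 * c)) * Real.log ((π/2)/(Real.sqrt (c^2 - d^2)/c)) ≤ J1 c d := by
  have hc : 0 < c := hd.trans hdc
  set ε := Real.sqrt (c^2 - d^2) with hεdef
  have hcd2 : 0 < c^2 - d^2 := by nlinarith
  have hε0 : 0 < ε := Real.sqrt_pos.mpr hcd2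
  have ha : 0 < ε/c := by positivity
  have hK : 0 < Real.sqrt 2 * c := by positivity
  set b := π/2 - ε/c with hb
  have hb0 : 0 < b := by simp only [hb]; linarith
  have hbpi : b ≤ π/2 := by simp only [hb]; linarith
  rw [← log_aux hK ha hε.le]
  have comp : ∫ θ in (0:ℝ)..b, 1/(Real.sqrt 2 * c * (π/2 - θ))
      = ∫ x in (ε/c)..(π/2), 1/(Real.sqrt 2 * c * x) := by
    have h := intervalIntegral.integral_comp_sub_left (a := (0:ℝ)) (b := b)
      (fun x => 1/(Real.sqrt 2 * c * x)) (π/2)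
    have e1 : π/2 - b = ε/c := by simp [hb]
    have e2 : π/2 - (0:ℝ) = π/2 := by ring
    rw [e1, e2] at h
    exact h
  rw [← comp]
  have hintK : IntervalIntegrable (fun θ : ℝ => 1/(Real.sqrt 2 * c * (π/2 - θ)))
      MeasureTheory.volume 0 b := by
    apply ContinuousOn.intervalIntegrable
    apply ContinuousOn.div continuousOn_const (by fun_prop)
    intro x hx
    rw [Set.uIcc_of_le hb0.le] at hx
    have : 0 < π/2 - x := by
      have := hx.2
      simp only [hb] at this
      linarith
    positivity
  have step1 : ∫ θ in (0:ℝ)..b, 1/(Real.sqrt 2 * c * (π/2 - θ))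
      ≤ ∫ θ in (0:ℝ)..b, 1 / Real.sqrt (c^2 - d^2 * Real.sin θ ^ 2) := by
    apply intervalIntegral.integral_mono_on hb0.le hintK
      ((cont1 hd.le hdc).intervalIntegrable _ _)
    intro θ hθ
    have hψ : ε/c ≤ π/2 - θ := by
      have := hθ.2
      simp only [hb] at this
      linarith
    have hψ0 : 0 < π/2 - θ := lt_of_lt_of_le ha hψ
    have hcos0 : 0 ≤ Real.cos θ := Real.cos_nonneg_of_mem_Icc
      ⟨by linarith [hθ.1], by linarith⟩
    have hcosle : Real.cos θ ≤ π/2 - θ := by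
      rw [← Real.sin_pi_div_two_sub]
      exact Real.sin_le hψ0.le
    have hεle : ε ≤ c*(π/2 - θ) := by
      rw [div_le_iff₀ hc] at hψ
      linarith
    have hden : c^2 - d^2 * Real.sin θ ^ 2 ≤ (Real.sqrt 2 * c * (π/2 - θ))^2 := by
      have e : (Real.sqrt 2 * c * (π/2 - θ))^2 = 2*(c*(π/2 - θ))^2 := by
        rw [mul_pow, mul_pow, Real.sq_sqrt (by norm_num : (0:ℝ) ≤ 2)]; ring
      rw [e]
      have hsc := Real.sin_sq_add_cos_sq θ
      have hε2 : ε^2 = c^2 - d^2 := Real.sq_sqrt hcd2.le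
      have B : ε^2 ≤ (c*(π/2 - θ))^2 := pow_le_pow_left₀ hε0.le hεle 2
      have C : Real.cos θ ^ 2 ≤ (π/2 - θ)^2 := pow_le_pow_left₀ hcos0 hcosle 2
      have D : d^2 * Real.cos θ ^ 2 ≤ c^2 * (π/2 - θ)^2 :=
        mul_le_mul (by nlinarith) C (sq_nonneg _) (sq_nonneg c)
      nlinarith [hε2, hsc, B, D]
    calc 1/(Real.sqrt 2 * c * (π/2 - θ)) = 1/Real.sqrt ((Real.sqrt 2 * c * (π/2 - θ))^2) := by
          rw [Real.sqrt_sq (by positivity)]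
      _ ≤ _ := one_div_le_one_div_of_le (Real.sqrt_pos.mpr (denom1_pos hd.le hdc θ))
          (Real.sqrt_le_sqrt hden)
  have step2 : ∫ θ in (0:ℝ)..b, 1 / Real.sqrt (c^2 - d^2 * Real.sin θ ^ 2) ≤ J1 c d := by
    apply intervalIntegral.integral_mono_interval (le_refl _) hb0.le hbpi
      (Filter.Eventually.of_forall (fun θ => by positivity))
      ((cont1 hd.le hdc).intervalIntegrable _ _)
  linarith

lemma tauStar_eq {c d : ℝ} (hd : 0 < d) (hdc : d < c) :
    tauStar c d = -(4*π*(J1 c d/J0 c d)) := by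
  rw [tauStar, I1_eq hd hdc, I0_eq hd hdc]
  ring

lemma tau_neg {c : ℝ} (hc : 0 < c) : ∀ d ∈ Set.Ioo (0:ℝ) c, tauStar c d < 0 := by
  intro d hd
  rw [tauStar_eq hd.1 hd.2]
  have h1 := J1_pos hd.1.le hd.2
  have h0 := J0_pos hd.1 hd.2
  have : 0 < 4*π*(J1 c d/J0 c d) :=
    mul_pos (by positivity) (div_pos h1 h0)
  linarith

lemma tau_anti {c : ℝ} (hc : 0 < c) : StrictAntiOn (tauStar c) (Set.Ioo 0 c) := by
  intro d₁ h₁ d₂ h₂ h12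
  rw [tauStar_eq h₁.1 h₁.2, tauStar_eq h₂.1 h₂.2]
  apply neg_lt_neg
  apply mul_lt_mul_of_pos_left _ (by positivity : (0:ℝ) < 4*π)
  have hJ1 := J1_mono h₁.1 h12 h₂.2
  have hJ0 := J0_anti h₁.1 h12 h₂.2
  have p1₂ := J1_pos h₂.1.le h₂.2
  have p0₁ := J0_pos h₁.1 h₁.2
  have p0₂ := J0_pos h₂.1 h₂.2
  calc J1 c d₁/J0 c d₁ < J1 c d₂/J0 c d₁ := (div_lt_div_iff_of_pos_right p0₁).mpr hJ1
    _ < J1 c d₂/J0 c d₂ := div_lt_div_of_pos_left p1₂ p0₂ hJ0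

lemma tau_contAt {c x : ℝ} (hx : x ∈ Set.Ioo (0:ℝ) c) : ContinuousAt (tauStar c) x := by
  have h1 : ContinuousAt (fun d => -(4*π*(J1 c d/J0 c d))) x := by
    apply ContinuousAt.neg
    apply ContinuousAt.mul continuousAt_const
    exact (J1_contAt hx.1 hx.2).div (J0_contAt hx.1 hx.2) (ne_of_gt (J0_pos hx.1 hx.2))
  apply h1.congr
  filter_upwards [Ioo_mem_nhds hx.1 hx.2] with d hd
  rw [tauStar_eq hd.1 hd.2]

lemma tendsto_J0_atTop {c : ℝ} (hc : 0 < c) :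
    Tendsto (fun d => J0 c d) (𝓝[>] (0:ℝ)) atTop := by
  have hpi2 : (1:ℝ) < π/2 := by linarith [Real.pi_gt_three]
  apply tendsto_atTop_mono' (𝓝[>] (0:ℝ))
    (f₁ := fun d => (1/(Real.sqrt 2 * c)) * Real.log ((π/2)/(d/c)))
  · filter_upwards [Ioo_mem_nhdsGT_of_mem (⟨le_refl (0:ℝ), hc⟩ : (0:ℝ) ∈ Set.Ico 0 c)]
      with d hd
    have hsm : d/c < π/2 := by
      have : d/c < 1 := (div_lt_one hc).mpr hd.2
      linarith
    exact J0_ge_log hd.1 hd.2 hsm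
  · have h1 : Tendsto (fun d : ℝ => (π/2)/(d/c)) (𝓝[>] (0:ℝ)) atTop := by
      apply Tendsto.congr' _ ((tendsto_inv_nhdsGT_zero.const_mul_atTop
        (show (0:ℝ) < π*c/2 by positivity)))
      filter_upwards [self_mem_nhdsWithin] with d (hd : (0:ℝ) < d)
      field_simp
    exact (Real.tendsto_log_atTop.comp h1).const_mul_atTop (by positivity)

lemma tendsto_J1_atTop {c : ℝ} (hc : 0 < c) :
    Tendsto (fun d => J1 c d) (𝓝[<] c) atTop := by
  have hpi2 : (1:ℝ) < π/2 := by linarith [Real.pi_gt_three]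
  have hmem : Set.Ioo (c/2) c ∈ 𝓝[<] c :=
    Ioo_mem_nhdsLT_of_mem ⟨by linarith, le_refl c⟩
  have heps : ∀ d ∈ Set.Ioo (c/2) c, Real.sqrt (c^2 - d^2)/c < π/2 := by
    intro d hd
    have h0 : 0 < d := lt_trans (by linarith) hd.1
    have hlt : Real.sqrt (c^2 - d^2) < Real.sqrt (c^2) :=
      Real.sqrt_lt_sqrt (by nlinarith [hd.2, h0]) (by nlinarith [h0])
    rw [Real.sqrt_sq hc.le] at hlt
    have : Real.sqrt (c^2 - d^2)/c < 1 := (div_lt_one hc).mpr hlt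
    linarith
  apply tendsto_atTop_mono' (𝓝[<] c)
    (f₁ := fun d => (1/(Real.sqrt 2 * c)) * Real.log ((π/2)/(Real.sqrt (c^2 - d^2)/c)))
  · filter_upwards [hmem] with d hd
    exact J1_ge_log (lt_trans (by linarith) hd.1) hd.2 (heps d hd)
  · have ht : Tendsto (fun d => Real.sqrt (c^2 - d^2)/c) (𝓝[<] c) (𝓝[>] (0:ℝ)) := by
      rw [tendsto_nhdsWithin_iff]
      constructor
      · have hcont : Continuous (fun d : ℝ => Real.sqrt (c^2 - d^2)/c) :=
          ((continuous_const.sub (continuous_pow 2)).sqrt).div_const c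
        have := hcont.tendsto c
        have he : Real.sqrt (c^2 - c^2)/c = 0 := by simp
        rw [he] at this
        exact this.mono_left nhdsWithin_le_nhds
      · filter_upwards [hmem] with d hd
        have h0 : 0 < d := lt_trans (by linarith) hd.1
        have : 0 < c^2 - d^2 := by nlinarith [hd.2]
        exact mem_Ioi.mpr (by positivity)
    have h1 : Tendsto (fun t : ℝ => (π/2)/t) (𝓝[>] (0:ℝ)) atTop := by
      apply Tendsto.congr' _ ((tendsto_inv_nhdsGT_zero.const_mul_atTop
        (show (0:ℝ) < π/2 by positivity)))
      filter_upwards [self_mem_nhdsWithin] with t (ht : (0:ℝ) < t)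
      ring
    exact ((Real.tendsto_log_atTop.comp (h1.comp ht)).const_mul_atTop (by positivity))

lemma tendsto_tau_zero {c : ℝ} (hc : 0 < c) :
    Tendsto (tauStar c) (𝓝[>] (0:ℝ)) (𝓝 0) := by
  set M := (π/2) * (1/Real.sqrt (c^2 - (c/2)^2)) with hM
  have hM0 : 0 < c^2 - (c/2)^2 := by nlinarith
  have hMpos : 0 < M := by
    have := Real.sqrt_pos.mpr hM0
    simp only [hM]; positivity
  have hlow : Tendsto (fun d => -(4*π*M/J0 c d)) (𝓝[>] (0:ℝ)) (𝓝 0) := by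
    have := Tendsto.div_atTop (tendsto_const_nhds (x := 4*π*M)) (tendsto_J0_atTop hc)
    have h2 := this.neg
    rw [neg_zero] at h2
    exact h2
  apply tendsto_of_tendsto_of_tendsto_of_le_of_le' hlow tendsto_const_nhds
  · -- lower bound eventually
    filter_upwards [Ioo_mem_nhdsGT_of_mem (⟨le_refl (0:ℝ), half_pos hc⟩ : (0:ℝ) ∈ Set.Ico 0 (c/2))]
      with d hd
    have hdc : d < c := by linarith [hd.2]
    have p1 := J1_pos hd.1.le hdc
    have p0 := J0_pos hd.1 hdc
    have hub := J1_ub hd.1.le hdc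
    have hMle : J1 c d ≤ M := by
      apply le_trans hub
      simp only [hM]
      apply mul_le_mul_of_nonneg_left _ (by positivity)
      apply one_div_le_one_div_of_le (Real.sqrt_pos.mpr hM0)
      apply Real.sqrt_le_sqrt
      nlinarith [hd.1, hd.2]
    rw [tauStar_eq hd.1 hdc]
    have : 4*π*(J1 c d/J0 c d) ≤ 4*π*M/J0 c d := by
      rw [mul_div_assoc]
      apply mul_le_mul_of_nonneg_left _ (by positivity)
      exact (div_le_div_iff_of_pos_right p0).mpr hMle
    linarith
  · filter_upwards [Ioo_mem_nhdsGT_of_mem (⟨le_refl (0:ℝ), half_pos hc⟩ : (0:ℝ) ∈ Set.Ico 0 (c/2))]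
      with d hd
    have hdc : d < c := by linarith [hd.2]
    exact le_of_lt (tau_neg hc d ⟨hd.1, hdc⟩)

lemma tendsto_tau_atBot {c : ℝ} (hc : 0 < c) :
    Tendsto (tauStar c) (𝓝[<] c) atBot := by
  have hmem : Set.Ioo (c/2) c ∈ 𝓝[<] c :=
    Ioo_mem_nhdsLT_of_mem ⟨by linarith, le_refl c⟩
  apply tendsto_atBot_mono' (𝓝[<] c) (f₁ := fun d => -(4*c*J1 c d))
  · filter_upwards [hmem] with d hd
    have h0 : 0 < d := lt_trans (by linarith) hd.1
    have p1 := J1_pos h0.le hd.2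
    have p0 := J0_pos h0 hd.2
    have hup : J0 c d ≤ π/c := by
      calc J0 c d ≤ (π/2) * (1/d) := J0_ub h0 hd.2
        _ ≤ (π/2) * (1/(c/2)) := by
            apply mul_le_mul_of_nonneg_left _ (by positivity)
            exact one_div_le_one_div_of_le (by linarith) hd.1.le
        _ = π/c := by field_simp
    have h5 : J1 c d * (c/π) ≤ J1 c d / J0 c d := by
      rw [div_eq_mul_one_div (J1 c d) (J0 c d)]
      apply mul_le_mul_of_nonneg_left _ p1.le
      rw [show c/π = 1/(π/c) by field_simp]
      exact one_div_le_one_div_of_le p0 hup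
    rw [tauStar_eq h0 hd.2]
    have he : 4*π*(J1 c d * (c/π)) = 4*c*J1 c d := by
      field_simp
    have := mul_le_mul_of_nonneg_left h5 (show (0:ℝ) ≤ 4*π by positivity)
    rw [he] at this
    linarith
  · have h1 := (tendsto_J1_atTop hc).const_mul_atTop (show (0:ℝ) < 4*c by positivity)
    exact tendsto_neg_atTop_atBot.comp h1

lemma tau_surj {c : ℝ} (hc : 0 < c) :
    ∀ s : ℝ, s < 0 → ∃ d ∈ Set.Ioo (0:ℝ) c, tauStar c d = s := by
  intro s hs
  have h1 : ∀ᶠ d in 𝓝[>] (0:ℝ), s < tauStar c d ∧ d ∈ Set.Ioo (0:ℝ) c := by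
    filter_upwards [(tendsto_tau_zero hc).eventually (eventually_gt_nhds hs),
      Ioo_mem_nhdsGT_of_mem (⟨le_refl (0:ℝ), hc⟩ : (0:ℝ) ∈ Set.Ico 0 c)] with d hda hdb
    exact ⟨hda, hdb⟩
  obtain ⟨d₁, hd₁s, hd₁⟩ := h1.exists
  have h2 : ∀ᶠ d in 𝓝[<] c, tauStar c d < s ∧ d ∈ Set.Ioo (0:ℝ) c := by
    filter_upwards [(tendsto_tau_atBot hc).eventually (eventually_lt_atBot s),
      Ioo_mem_nhdsLT_of_mem (⟨half_lt_self hc, le_refl c⟩ : c ∈ Set.Ioc (c/2) c)]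
      with d hda hdb
    exact ⟨hda, ⟨lt_trans (half_pos hc) hdb.1, hdb.2⟩⟩
  obtain ⟨d₂, hd₂s, hd₂⟩ := h2.exists
  have h12 : d₁ < d₂ := by
    by_contra h
    push_neg at h
    rcases eq_or_lt_of_le h with he | hlt
    · rw [← he] at hd₁s; linarith
    · have := tau_anti hc hd₂ hd₁ hlt
      linarith
  have hcont : ContinuousOn (tauStar c) (Set.Icc d₁ d₂) := fun x hx =>
    (tau_contAt ⟨lt_of_lt_of_le hd₁.1 hx.1, lt_of_le_of_lt hx.2 hd₂.2⟩).continuousWithinAt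
  have hIVT := intermediate_value_Icc' h12.le hcont
  obtain ⟨d, hd, hds⟩ := hIVT ⟨hd₂s.le, hd₁s.le⟩
  exact ⟨d, ⟨lt_of_lt_of_le hd₁.1 hd.1, lt_of_le_of_lt hd.2 hd₂.2⟩, hds⟩

theorem stmt2 (c : ℝ) (hc : 0 < c) :
    (∀ d ∈ Set.Ioo (0:ℝ) c, tauStar c d < 0) ∧
    StrictAntiOn (tauStar c) (Set.Ioo 0 c) ∧
    Filter.Tendsto (tauStar c) (nhdsWithin 0 (Set.Ioi 0)) (nhds 0) ∧
    Filter.Tendsto (tauStar c) (nhdsWithin c (Set.Iio c)) Filter.atBot ∧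
    ∃ h : ℝ → ℝ,
      (∀ s : ℝ, s < 0 → h s ∈ Set.Ioo 0 c ∧ tauStar c (h s) = s) ∧
      (∀ d ∈ Set.Ioo (0:ℝ) c, h (tauStar c d) = d) := by
  refine ⟨tau_neg hc, tau_anti hc, tendsto_tau_zero hc, tendsto_tau_atBot hc, ?_⟩
  have hsurj := tau_surj hc
  classical
  refine ⟨fun s => if hs : s < 0 then (hsurj s hs).choose else c/2, ?_, ?_⟩
  · intro s hs
    simp only [dif_pos hs]
    obtain ⟨hmem, heq⟩ := (hsurj s hs).choose_spec
    exact ⟨hmem, heq⟩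
  · intro d hd
    have hts := tau_neg hc d hd
    simp only [dif_pos hts]
    obtain ⟨hmem, heq⟩ := (hsurj _ hts).choose_spec
    exact (tau_anti hc).injOn hmem hd heq
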